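/- Let B(z) = A + (z − z₁)⁻¹ • (p·q†) be an elementary divisor with pole z₁ and zero ζ₁, whose rank-one part is the outer product of a nonzero column vector p and a nonzero row vector q†. Let z ≠ z₁ be a complex number and let w, v be column vectors in ℂʳ with v = B(z)·w. If the scalars q†·w and q†·A⁻¹·v are both nonzero, then the rank-one part is recovered as p·q† = A · ((z₁ − z)·(q†·w)⁻¹ • w + (z − ζ₁)·(q†·A⁻¹·v)⁻¹ • (A⁻¹·v)) · q†. -/

import Mathlib

open Matrix

/-- Recovering the rank-one part of an elementary divisor from its action on a
column vector: if `v = B(z) w` with `B(z) = A + (z - z₁)⁻¹ • (p·q†)`, then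
`p·q† = A ((z₁ - z)(q†w)⁻¹ • w + (z - ζ₁)(q†A⁻¹v)⁻¹ • (A⁻¹v)) q†`. -/
theorem elementary_divisor_recover_column
    (r : ℕ) (hr : 1 ≤ r)
    (A : Matrix (Fin r) (Fin r) ℂ) (hA : IsUnit A.det)
    (p : Matrix (Fin r) (Fin 1) ℂ) (q : Matrix (Fin 1) (Fin r) ℂ)
    (hp : p ≠ 0) (hq : q ≠ 0)
    (z₁ ζ₁ : ℂ) (hζ : (p * q * A⁻¹).trace = z₁ - ζ₁)
    (z : ℂ) (hz : z ≠ z₁)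
    (w v : Matrix (Fin r) (Fin 1) ℂ)
    (hv : v = (A + (z - z₁)⁻¹ • (p * q)) * w)
    (h1 : (q * w) 0 0 ≠ 0) (h2 : (q * A⁻¹ * v) 0 0 ≠ 0) :
    p * q = A * (((z₁ - z) * ((q * w) 0 0)⁻¹) • w
      + ((z - ζ₁) * ((q * A⁻¹ * v) 0 0)⁻¹) • (A⁻¹ * v)) * q := by
  have hA' : A⁻¹ * A = 1 := nonsing_inv_mul A hA
  have hAA : A * A⁻¹ = 1 := mul_nonsing_inv A hA
  set α := (q * w) 0 0 with hα
  set β := (q * A⁻¹ * v) 0 0 with hβ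
  have hzz : z - z₁ ≠ 0 := sub_ne_zero.mpr hz
  -- right multiplication by a 1×1 matrix is scalar multiplication
  have smul1 : ∀ (x : Matrix (Fin r) (Fin 1) ℂ) (M : Matrix (Fin 1) (Fin 1) ℂ),
      x * M = M 0 0 • x := by
    intro x M
    ext i j
    rw [Subsingleton.elim j 0]
    simp only [Matrix.mul_apply, Fin.sum_univ_one, Matrix.smul_apply, smul_eq_mul]
    exact mul_comm _ _
  have τdef : (q * (A⁻¹ * p)) 0 0 = z₁ - ζ₁ := by
    have h : (p * q * A⁻¹).trace = (q * (A⁻¹ * p)).trace := by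
      rw [Matrix.trace_mul_comm, ← Matrix.mul_assoc, Matrix.trace_mul_comm]
    rw [← hζ, h, Matrix.trace_fin_one]
  -- key expression for A⁻¹ v
  have hAv : A⁻¹ * v = w + ((z - z₁)⁻¹ * α) • (A⁻¹ * p) := by
    rw [hv, Matrix.add_mul, Matrix.mul_add, ← Matrix.mul_assoc, hA',
      Matrix.one_mul]
    congr 1
    rw [Matrix.smul_mul, Matrix.mul_smul, Matrix.mul_assoc, smul1 p (q * w),
      Matrix.mul_smul, smul_smul]
  have hβα : β = α + (z - z₁)⁻¹ * α * (z₁ - ζ₁) := by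
    rw [hβ, Matrix.mul_assoc, hAv, Matrix.mul_add, Matrix.mul_smul]
    simp only [Matrix.add_apply, Matrix.smul_apply, τdef, smul_eq_mul]
    rfl
  have hβ' : β * (z - z₁) = α * (z - ζ₁) := by
    linear_combination (z - z₁) * hβα + (α * (z₁ - ζ₁)) * mul_inv_cancel₀ hzz
  -- scalar coefficients
  have hzζ : z - ζ₁ ≠ 0 := by
    intro h
    apply h2
    have := hβ'
    rw [h, mul_zero] at this
    exact (mul_eq_zero.mp this).resolve_right hzz
  have hc2 : ((z - ζ₁) * β⁻¹) * ((z - z₁)⁻¹ * α) = 1 := by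
    have h : ((z - ζ₁) * β⁻¹) * ((z - z₁)⁻¹ * α) = (α * (z - ζ₁)) / (β * (z - z₁)) := by
      field_simp
    rw [h, ← hβ', div_self (mul_ne_zero h2 hzz)]
  have hc1 : ((z₁ - z) * α⁻¹) + ((z - ζ₁) * β⁻¹) = 0 := by
    field_simp
    linear_combination -hβ'
  -- finish
  rw [hAv, smul_add, smul_smul, hc2, one_smul, ← add_assoc, ← add_smul, hc1,
    zero_smul, zero_add, ← Matrix.mul_assoc, hAA, Matrix.one_mul]
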